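/- Let 0 < α < 1, T > 0, N a positive integer, and r ≥ 1, and let p^{(n)}_{n−i} be the coefficients built from the L1 weights on the graded mesh t_n = T(n/N)^r. Then there exists a constant C > 0, depending only on α, r and T but not on N, such that for every n = 1, 2, ..., N one has Σ_{s=1}^{n} p^{(n)}_{n−s} s^{−min{2−α, rα}} ≤ C N^{−min{2−α, rα}}. -/

import Mathlib

noncomputable section

/-- The graded mesh `t_n = T (n/N)^r` on `[0,T]`. -/
def gmesh (T r : ℝ) (N n : ℕ) : ℝ := T * ((n : ℝ) / (N : ℝ)) ^ r

/-- The step sizes `τ_n = t_n - t_{n-1}` of the graded mesh. -/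
def gstep (T r : ℝ) (N n : ℕ) : ℝ := gmesh T r N n - gmesh T r N (n - 1)

/-- The L1 weights
`d_{n,k} = ((t_n − t_{n−k})^{1−α} − (t_n − t_{n−k+1})^{1−α})/τ_{n−k+1}`. -/
def L1w (α T r : ℝ) (N n k : ℕ) : ℝ :=
  ((gmesh T r N n - gmesh T r N (n - k)) ^ (1 - α)
      - (gmesh T r N n - gmesh T r N (n - k + 1)) ^ (1 - α)) / gstep T r N (n - k + 1)

/-- The coefficients `b^{(n)}_{n−i} = d_{n,n−i+1}/Γ(2−α)`; here `bcoef α T r N n i`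
denotes `b^{(n)}_{n-i}`. -/
def bcoef (α T r : ℝ) (N n i : ℕ) : ℝ := L1w α T r N n (n - i + 1) / Real.Gamma (2 - α)

set_option linter.unusedSectionVars false

section Lemmas

variable {α T r : ℝ} (hα0 : 0 < α) (hα1 : α < 1) (hT : 0 < T) (hr : 1 ≤ r)
variable {N : ℕ} (hN : 0 < N)

include hT hr hN
lemma gmesh_nonneg (k : ℕ) : 0 ≤ gmesh T r N k := by
  unfold gmesh
  have : (0:ℝ) ≤ (k : ℝ) / (N : ℝ) := by positivity
  positivity

lemma gmesh_lt {a b : ℕ} (h : a < b) : gmesh T r N a < gmesh T r N b := by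
  unfold gmesh
  have hNpos : (0:ℝ) < (N:ℝ) := by exact_mod_cast hN
  apply mul_lt_mul_of_pos_left _ hT
  apply Real.rpow_lt_rpow (by positivity) _ (by linarith)
  apply div_lt_div_of_pos_right _ hNpos
  exact_mod_cast h

lemma gmesh_mono {a b : ℕ} (h : a ≤ b) : gmesh T r N a ≤ gmesh T r N b := by
  rcases Nat.lt_or_ge a b with h' | h'
  · exact (gmesh_lt hT hr hN h').le
  · have : a = b := le_antisymm h h'
    simp [this]

lemma gmesh_zero : gmesh T r N 0 = 0 := by
  simp [gmesh, Real.zero_rpow (by linarith : r ≠ 0)]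

lemma gmesh_pos {k : ℕ} (hk : 1 ≤ k) : 0 < gmesh T r N k := by
  have := gmesh_lt hT hr hN (show 0 < k from hk)
  rwa [gmesh_zero hT hr hN] at this

lemma gstep_pos {k : ℕ} (hk : 1 ≤ k) : 0 < gstep T r N k := by
  have : k - 1 < k := by omega
  exact sub_pos.2 (gmesh_lt hT hr hN this)
omit hT hr hN

lemma Gamma2_pos (hα1 : α < 1) : 0 < Real.Gamma (2 - α) :=
  Real.Gamma_pos_of_pos (by linarith)

lemma bcoef_eq {n i : ℕ} (hi : 1 ≤ i) (hin : i ≤ n) :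
    bcoef α T r N n i =
      ((gmesh T r N n - gmesh T r N (i - 1)) ^ (1 - α)
        - (gmesh T r N n - gmesh T r N i) ^ (1 - α)) / gstep T r N i / Real.Gamma (2 - α) := by
  have h1 : n - (n - i + 1) = i - 1 := by omega
  have h2 : i - 1 + 1 = i := by omega
  rw [bcoef, L1w, h1, h2]

include hT hr hN

lemma bcoef_self {k : ℕ} (hα1 : α < 1) (hk : 1 ≤ k) :
    bcoef α T r N k k = (gstep T r N k) ^ (-α) / Real.Gamma (2 - α) := by
  have hτ : 0 < gstep T r N k := gstep_pos hT hr hN hk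
  rw [bcoef_eq hk le_rfl]
  rw [sub_self, Real.zero_rpow (by linarith : (1:ℝ) - α ≠ 0), sub_zero]
  have : gmesh T r N k - gmesh T r N (k - 1) = gstep T r N k := rfl
  rw [this]
  have key : gstep T r N k ^ (1 - α) = gstep T r N k ^ (-α) * gstep T r N k := by
    rw [show (1:ℝ) - α = -α + 1 by ring, Real.rpow_add hτ, Real.rpow_one]
  rw [key, mul_div_assoc, div_self hτ.ne', mul_one]

omit hT hr hN

/-- Concavity tangent inequality for `x ^ p`, `0 < p < 1`. -/
lemma rpow_tangent {b c p : ℝ} (hb : 0 ≤ b) (hbc : b ≤ c) (hc : 0 < c)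
    (hp0 : 0 < p) (hp1 : p < 1) : p * (c ^ p / c) * (c - b) ≤ c ^ p - b ^ p := by
  have hcp : (0:ℝ) < c ^ p := Real.rpow_pos_of_pos hc p
  have hx0 : 0 ≤ b / c := by positivity
  have key0 : (b / c) ^ p * (1:ℝ) ^ (1 - p) ≤ p * (b / c) + (1 - p) * 1 :=
    Real.geom_mean_le_arith_mean2_weighted (w₁ := p) (w₂ := 1 - p) (p₁ := b / c) (p₂ := 1)
      hp0.le (by linarith) hx0 zero_le_one (by ring)
  have key : (b / c) ^ p ≤ p * (b / c) + (1 - p) * 1 := by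
    rwa [Real.one_rpow, mul_one] at key0
  have hbp : b ^ p = (b / c) ^ p * c ^ p := by
    rw [← Real.mul_rpow hx0 hc.le, div_mul_cancel₀ _ hc.ne']
  have h2 : b ^ p ≤ (p * (b / c) + (1 - p)) * c ^ p := by
    rw [hbp]
    have := mul_le_mul_of_nonneg_right key hcp.le
    nlinarith [this]
  have h3 : p * (c ^ p / c) * (c - b) = c ^ p - (p * (b / c) + (1 - p)) * c ^ p := by
    field_simp
    ring
  linarith

include hT hr hN

lemma bcoef_lower {s k : ℕ} (hα0 : 0 < α) (hα1 : α < 1) (hk : 1 ≤ k) (hks : k ≤ s) :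
    (1 - α) * (gmesh T r N s) ^ (-α) / Real.Gamma (2 - α) ≤ bcoef α T r N s k := by
  have hΓ : 0 < Real.Gamma (2 - α) := Gamma2_pos hα1
  have hτ : 0 < gstep T r N k := gstep_pos hT hr hN hk
  have hts : 0 < gmesh T r N s := gmesh_pos hT hr hN (le_trans hk hks)
  set c : ℝ := gmesh T r N s - gmesh T r N (k - 1) with hc_def
  set b : ℝ := gmesh T r N s - gmesh T r N k with hb_def
  have hb0 : 0 ≤ b := sub_nonneg.2 (gmesh_mono hT hr hN hks)
  have hcb : c - b = gstep T r N k := by rw [hc_def, hb_def, gstep]; ring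
  have hbc : b ≤ c := by
    have := gmesh_mono hT hr hN (show k - 1 ≤ k by omega)
    rw [hc_def, hb_def]; linarith
  have hblt : b < c := by
    have := gmesh_lt hT hr hN (show k - 1 < k by omega)
    rw [hb_def, hc_def]; linarith
  have hc0 : 0 < c := lt_of_le_of_lt hb0 hblt
  have hcts : c ≤ gmesh T r N s := by
    have := gmesh_nonneg hT hr hN (k - 1)
    rw [hc_def]; linarith
  rw [bcoef_eq hk hks, ← hc_def, ← hb_def, div_le_div_iff_of_pos_right hΓ]
  have hp : (0:ℝ) < 1 - α := by linarith
  have tangent := rpow_tangent hb0 hbc hc0 hp (by linarith)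
  have hcc : c ^ ((1:ℝ) - α) / c = c ^ (-α) := by
    have h := Real.rpow_sub hc0 (1 - α) 1
    rw [Real.rpow_one, show (1:ℝ) - α - 1 = -α by ring] at h
    exact h.symm
  rw [hcc] at tangent
  rw [hcb] at tangent
  have hmono : gmesh T r N s ^ (-α) ≤ c ^ (-α) :=
    Real.rpow_le_rpow_of_nonpos hc0 hcts (by linarith)
  rw [le_div_iff₀ hτ]
  calc (1 - α) * gmesh T r N s ^ (-α) * gstep T r N k
      ≤ (1 - α) * c ^ (-α) * gstep T r N k :=
        mul_le_mul_of_nonneg_right (mul_le_mul_of_nonneg_left hmono hp.le) hτ.le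
    _ ≤ c ^ (1 - α) - b ^ (1 - α) := by linarith [tangent]


lemma bcoef_mono {s i : ℕ} (hα0 : 0 < α) (hα1 : α < 1) (hi : 1 ≤ i) (his : i + 1 ≤ s) :
    bcoef α T r N s i ≤ bcoef α T r N s (i + 1) := by
  have hΓ : 0 < Real.Gamma (2 - α) := Gamma2_pos hα1
  have hconc : ConcaveOn ℝ (Set.Ici 0) fun x : ℝ => x ^ ((1:ℝ) - α) :=
    Real.concaveOn_rpow (by linarith) (by linarith)
  set x : ℝ := gmesh T r N s - gmesh T r N (i + 1) with hx_def
  set y : ℝ := gmesh T r N s - gmesh T r N i with hy_def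
  set z : ℝ := gmesh T r N s - gmesh T r N (i - 1) with hz_def
  have hx0 : 0 ≤ x := sub_nonneg.2 (gmesh_mono hT hr hN his)
  have hxy : x < y := by
    have := gmesh_lt hT hr hN (show i < i + 1 by omega)
    rw [hx_def, hy_def]; linarith
  have hyz : y < z := by
    have := gmesh_lt hT hr hN (show i - 1 < i by omega)
    rw [hy_def, hz_def]; linarith
  have hz0 : (0:ℝ) ≤ z := le_trans hx0 (le_trans hxy.le hyz.le)
  have slope := hconc.slope_anti_adjacent (Set.mem_Ici.2 hx0) (Set.mem_Ici.2 hz0) hxy hyz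
  rw [bcoef_eq hi (by omega), bcoef_eq (by omega) his]
  rw [div_le_div_iff_of_pos_right hΓ]
  have e1 : (i + 1) - 1 = i := by omega
  rw [e1]
  have hzy : z - y = gstep T r N i := by rw [hz_def, hy_def, gstep]; ring
  have hyx : y - x = gstep T r N (i + 1) := by
    rw [hy_def, hx_def, gstep, e1]; ring
  have goal1 : (z ^ ((1:ℝ) - α) - y ^ ((1:ℝ) - α)) / (z - y)
      ≤ (y ^ ((1:ℝ) - α) - x ^ ((1:ℝ) - α)) / (y - x) := slope
  rw [hzy, hyx] at goal1
  rw [← hx_def, ← hy_def, ← hz_def]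
  exact goal1

end Lemmas

/-- Auxiliary definition: `pcoefAux α T r N n m` is the coefficient `p^{(n)}_m`,
defined by `p^{(n)}_0 = Γ(2−α) τ_n^α` and, for `m = n - i` with `1 ≤ i ≤ n−1`,
`p^{(n)}_{n−i} = Γ(2−α) τ_i^α Σ_{k=i+1}^{n} (b^{(k)}_{k−i−1} − b^{(k)}_{k−i}) p^{(n)}_{n−k}`
(the sum over `k ∈ [i+1, n]` is re-indexed by `j = n - k ∈ [0, n-i-1]`). -/
def pcoefAux (α T r : ℝ) (N n : ℕ) : ℕ → ℝ
  | 0 => Real.Gamma (2 - α) * (gstep T r N n) ^ α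
  | (m + 1) =>
      Real.Gamma (2 - α) * (gstep T r N (n - (m + 1))) ^ α *
        ∑ j ∈ (Finset.range (m + 1)).attach,
          (bcoef α T r N (n - j.1) (n - m) - bcoef α T r N (n - j.1) (n - (m + 1))) *
            pcoefAux α T r N n j.1
  decreasing_by
    have := j.2
    simp only [Finset.mem_range] at this
    omega

/-- `pcoef α T r N n i` is the coefficient `p^{(n)}_{n−i}` for `1 ≤ i ≤ n`. -/
def pcoef (α T r : ℝ) (N n i : ℕ) : ℝ := pcoefAux α T r N n (n - i)

section Lemmas2

variable {α T r : ℝ} (hα0 : 0 < α) (hα1 : α < 1) (hT : 0 < T) (hr : 1 ≤ r)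
variable {N : ℕ} (hN : 0 < N)

lemma pcoefAux_succ (n m : ℕ) :
    pcoefAux α T r N n (m + 1) =
      Real.Gamma (2 - α) * (gstep T r N (n - (m + 1))) ^ α *
        ∑ j ∈ Finset.range (m + 1),
          (bcoef α T r N (n - j) (n - m) - bcoef α T r N (n - j) (n - (m + 1))) *
            pcoefAux α T r N n j := by
  rw [pcoefAux]
  rw [Finset.sum_attach (Finset.range (m + 1)) (fun j =>
    (bcoef α T r N (n - j) (n - m) - bcoef α T r N (n - j) (n - (m + 1))) *
      pcoefAux α T r N n j)]

include hα0 hα1 hT hr hN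

lemma pcoefAux_nonneg {n : ℕ} (hn1 : 1 ≤ n) :
    ∀ m, m + 1 ≤ n → 0 ≤ pcoefAux α T r N n m := by
  intro m
  induction m using Nat.strong_induction_on with
  | _ m ih =>
    intro hm
    match m with
    | 0 =>
      rw [pcoefAux]
      have := (Gamma2_pos (α := α) hα1).le
      have := Real.rpow_nonneg (gstep_pos hT hr hN hn1).le α
      positivity
    | m + 1 =>
      rw [pcoefAux_succ]
      apply mul_nonneg
      · apply mul_nonneg (Gamma2_pos (α := α) hα1).le
        exact Real.rpow_nonneg (gstep_pos hT hr hN (by omega)).le α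
      · apply Finset.sum_nonneg
        intro j hj
        rw [Finset.mem_range] at hj
        apply mul_nonneg
        · have hmono := bcoef_mono (s := n - j) (i := n - (m + 1)) hT hr hN hα0 hα1
            (by omega) (by omega)
          have e : n - (m + 1) + 1 = n - m := by omega
          rw [e] at hmono
          linarith
        · exact ih j (by omega) (by omega)

lemma pcoef_sum_one {n : ℕ} (hn1 : 1 ≤ n) :
    ∀ m, m + 1 ≤ n →
      ∑ j ∈ Finset.range (m + 1), bcoef α T r N (n - j) (n - m) * pcoefAux α T r N n j = 1 := by
  intro m
  induction m with
  | zero =>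
    intro _
    have hτ : 0 < gstep T r N n := gstep_pos hT hr hN hn1
    have hΓ : 0 < Real.Gamma (2 - α) := Gamma2_pos hα1
    simp only [zero_add, Finset.sum_range_one, Nat.sub_zero]
    rw [bcoef_self hT hr hN hα1 hn1, pcoefAux]
    rw [div_mul_eq_mul_div, div_eq_iff hΓ.ne']
    rw [show gstep T r N n ^ (-α) * (Real.Gamma (2 - α) * gstep T r N n ^ α)
        = (gstep T r N n ^ (-α) * gstep T r N n ^ α) * Real.Gamma (2 - α) by ring]
    rw [← Real.rpow_add hτ, neg_add_cancel, Real.rpow_zero, one_mul]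
  | succ m ih =>
    intro hm
    have hk' : 1 ≤ n - (m + 1) := by omega
    have hτ : 0 < gstep T r N (n - (m + 1)) := gstep_pos hT hr hN hk'
    have hΓ : 0 < Real.Gamma (2 - α) := Gamma2_pos hα1
    rw [Finset.sum_range_succ]
    rw [bcoef_self hT hr hN hα1 hk', pcoefAux_succ]
    have hpow : gstep T r N (n - (m + 1)) ^ (-α) * gstep T r N (n - (m + 1)) ^ α = 1 := by
      rw [← Real.rpow_add hτ, neg_add_cancel, Real.rpow_zero]
    set S := ∑ j ∈ Finset.range (m + 1),
      (bcoef α T r N (n - j) (n - m) - bcoef α T r N (n - j) (n - (m + 1))) *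
        pcoefAux α T r N n j with hS
    have collapse : gstep T r N (n - (m + 1)) ^ (-α) / Real.Gamma (2 - α) *
        (Real.Gamma (2 - α) * gstep T r N (n - (m + 1)) ^ α * S) = S := by
      rw [show gstep T r N (n - (m + 1)) ^ (-α) / Real.Gamma (2 - α) *
          (Real.Gamma (2 - α) * gstep T r N (n - (m + 1)) ^ α * S)
          = (gstep T r N (n - (m + 1)) ^ (-α) * gstep T r N (n - (m + 1)) ^ α) *
            ((Real.Gamma (2 - α) / Real.Gamma (2 - α)) * S) by ring]
      rw [hpow, div_self hΓ.ne', one_mul, one_mul]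
    rw [collapse, hS, ← Finset.sum_add_distrib]
    have hcong : ∀ j ∈ Finset.range (m + 1),
        bcoef α T r N (n - j) (n - (m + 1)) * pcoefAux α T r N n j +
          (bcoef α T r N (n - j) (n - m) - bcoef α T r N (n - j) (n - (m + 1))) *
            pcoefAux α T r N n j
        = bcoef α T r N (n - j) (n - m) * pcoefAux α T r N n j := by
      intro j _; ring
    rw [Finset.sum_congr rfl hcong]
    exact ih (by omega)

lemma pcoef_P2 {n : ℕ} (hn1 : 1 ≤ n) {k : ℕ} (hk1 : 1 ≤ k) (hkn : k ≤ n) :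
    ∑ s ∈ Finset.Icc k n, pcoef α T r N n s * bcoef α T r N s k = 1 := by
  have h := pcoef_sum_one hα0 hα1 hT hr hN hn1 (n - k) (by omega)
  rw [show n - k + 1 = n + 1 - k by omega, show n - (n - k) = k by omega] at h
  rw [← h]
  refine Finset.sum_bij' (fun s _ => n - s) (fun j _ => n - j) ?_ ?_ ?_ ?_ ?_
  · intro s hs
    simp only [Finset.mem_Icc] at hs
    simp only [Finset.mem_range]
    omega
  · intro j hj
    simp only [Finset.mem_range] at hj
    simp only [Finset.mem_Icc]
    omega
  · intro s hs
    simp only [Finset.mem_Icc] at hs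
    show n - (n - s) = s
    omega
  · intro j hj
    simp only [Finset.mem_range] at hj
    show n - (n - j) = j
    omega
  · intro s hs
    simp only [Finset.mem_Icc] at hs
    rw [pcoef, show n - (n - s) = s by omega]
    ring

end Lemmas2

/-- `Σ_{s=1}^{n} p^{(n)}_{n−s} s^{−min{2−α, rα}} ≤ C N^{−min{2−α, rα}}`
with `C` independent of `N`. -/
theorem pcoef_weighted_sum_bound
    (α T r : ℝ) (hα0 : 0 < α) (hα1 : α < 1) (hT : 0 < T) (hr : 1 ≤ r) :
    ∃ C > 0, ∀ N : ℕ, 0 < N → ∀ n : ℕ, 1 ≤ n → n ≤ N →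
      ∑ s ∈ Finset.Icc 1 n, pcoef α T r N n s * (s : ℝ) ^ (-(min (2 - α) (r * α)))
        ≤ C * (N : ℝ) ^ (-(min (2 - α) (r * α))) := by
  have hΓ : 0 < Real.Gamma (2 - α) := Real.Gamma_pos_of_pos (by linarith)
  have h1α : (0:ℝ) < 1 - α := by linarith
  set γ : ℝ := min (2 - α) (r * α) with hγ_def
  have hr0 : (0:ℝ) < r := by linarith
  have hγpos : 0 < γ := lt_min (by linarith) (by positivity)
  have hγle : γ ≤ r * α := min_le_right _ _
  set σ : ℝ := r * α - γ with hσ_def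
  have hσ0 : 0 ≤ σ := by rw [hσ_def]; linarith
  set C : ℝ := T ^ α * Real.Gamma (2 - α) / (1 - α) with hC_def
  have hCpos : 0 < C := div_pos (mul_pos (Real.rpow_pos_of_pos hT α) hΓ) h1α
  refine ⟨C, hCpos, ?_⟩
  intro N hN n hn1 hnN
  have hNpos : (0:ℝ) < (N:ℝ) := by exact_mod_cast hN
  -- the barrier sequence
  set w : ℕ → ℝ := fun k => if k = 0 then 0 else C * (N:ℝ) ^ (-(r * α)) * (k:ℝ) ^ σ
    with hw_def
  have hw0 : w 0 = 0 := by simp [hw_def]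
  have hwpos : ∀ k : ℕ, 1 ≤ k → w k = C * (N:ℝ) ^ (-(r * α)) * (k:ℝ) ^ σ := by
    intro k hk
    show (if k = 0 then (0:ℝ) else C * (N:ℝ) ^ (-(r * α)) * (k:ℝ) ^ σ) = _
    rw [if_neg (by omega)]
  have hwnonneg : ∀ k : ℕ, 0 ≤ w k := by
    intro k
    rcases Nat.eq_zero_or_pos k with h | h
    · simp [h, hw0]
    · rw [hwpos k h]
      have := Real.rpow_nonneg hNpos.le (-(r*α))
      have := Real.rpow_nonneg (Nat.cast_nonneg (α := ℝ) k) σ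
      positivity
  have hΔ : ∀ k : ℕ, 1 ≤ k → 0 ≤ w k - w (k - 1) := by
    intro k hk
    rcases Nat.eq_or_lt_of_le hk with h | h
    · rw [← h]
      simp only [Nat.sub_self, hw0, sub_zero]
      exact hwnonneg 1
    · have hk2 : 2 ≤ k := h
      rw [hwpos k hk, hwpos (k-1) (by omega), sub_nonneg]
      apply mul_le_mul_of_nonneg_left _ (by positivity)
      exact Real.rpow_le_rpow (Nat.cast_nonneg _) (by exact_mod_cast Nat.sub_le k 1) hσ0
  -- telescoping sums of increments
  have htel : ∀ m : ℕ, ∑ k ∈ Finset.Icc 1 m, (w k - w (k - 1)) = w m := by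
    intro m
    rw [← Finset.Ico_add_one_right_eq_Icc, Finset.sum_Ico_eq_sum_range]
    have hcg : ∀ k, w (1 + k) - w (1 + k - 1) = w (k + 1) - w k := by
      intro k
      rw [Nat.add_comm 1 k, Nat.add_sub_cancel]
    rw [Finset.sum_congr rfl (fun k _ => hcg k)]
    show ∑ k ∈ Finset.range m, (w (k + 1) - w k) = w m
    rw [Finset.sum_range_sub w m, hw0, sub_zero]
  -- the key pointwise lower bound
  have hkey : ∀ s : ℕ, 1 ≤ s → s ≤ n →
      (s:ℝ) ^ (-γ) ≤ ∑ k ∈ Finset.Icc 1 s, bcoef α T r N s k * (w k - w (k - 1)) := by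
    intro s hs1 hsn
    have hspos : (0:ℝ) < (s:ℝ) := by exact_mod_cast hs1
    set L : ℝ := (1 - α) * (gmesh T r N s) ^ (-α) / Real.Gamma (2 - α) with hL_def
    have hgm : gmesh T r N s ^ (-α)
        = T ^ (-α) * ((s:ℝ) ^ (-(r*α)) / (N:ℝ) ^ (-(r*α))) := by
      rw [gmesh, Real.mul_rpow hT.le (by positivity),
        ← Real.rpow_mul (by positivity : (0:ℝ) ≤ (s:ℝ)/(N:ℝ)),
        show r * (-α) = -(r*α) by ring,
        Real.div_rpow (Nat.cast_nonneg s) (Nat.cast_nonneg N)]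
    have hLw : L * w s = (s:ℝ) ^ (-γ) := by
      rw [hwpos s hs1, hL_def, hgm, hC_def]
      have u1 : T ^ (-α) * T ^ α = 1 := by
        rw [← Real.rpow_add hT, neg_add_cancel, Real.rpow_zero]
      have u2 : ((N:ℝ) ^ (-(r*α))) ≠ 0 := (Real.rpow_pos_of_pos hNpos _).ne'
      have u3 : (s:ℝ) ^ (-(r*α)) * (s:ℝ) ^ σ = (s:ℝ) ^ (-γ) := by
        rw [← Real.rpow_add hspos, show -(r*α) + σ = -γ by rw [hσ_def]; ring]
      calc (1 - α) * (T ^ (-α) * ((s:ℝ) ^ (-(r*α)) / (N:ℝ) ^ (-(r*α)))) /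
              Real.Gamma (2 - α) *
            (T ^ α * Real.Gamma (2 - α) / (1 - α) * (N:ℝ) ^ (-(r*α)) * (s:ℝ) ^ σ)
          = ((1 - α) / (1 - α)) * (Real.Gamma (2 - α) / Real.Gamma (2 - α)) *
              (T ^ (-α) * T ^ α) * ((N:ℝ) ^ (-(r*α)) / (N:ℝ) ^ (-(r*α))) *
              ((s:ℝ) ^ (-(r*α)) * (s:ℝ) ^ σ) := by ring
        _ = (s:ℝ) ^ (-γ) := by
            rw [div_self h1α.ne', div_self hΓ.ne', div_self u2, u1, u3]
            ring
    calc (s:ℝ) ^ (-γ) = L * w s := hLw.symm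
      _ = ∑ k ∈ Finset.Icc 1 s, L * (w k - w (k - 1)) := by
          rw [← Finset.mul_sum, htel s]
      _ ≤ ∑ k ∈ Finset.Icc 1 s, bcoef α T r N s k * (w k - w (k - 1)) := by
          apply Finset.sum_le_sum
          intro k hk
          simp only [Finset.mem_Icc] at hk
          exact mul_le_mul_of_nonneg_right
            (bcoef_lower hT hr hN hα0 hα1 hk.1 hk.2) (hΔ k hk.1)
  -- nonnegativity of the p coefficients
  have hpnn : ∀ s : ℕ, 1 ≤ s → s ≤ n → 0 ≤ pcoef α T r N n s := by
    intro s hs1 hsn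
    exact pcoefAux_nonneg hα0 hα1 hT hr hN hn1 (n - s) (by omega)
  -- main computation
  calc ∑ s ∈ Finset.Icc 1 n, pcoef α T r N n s * (s : ℝ) ^ (-γ)
      ≤ ∑ s ∈ Finset.Icc 1 n, pcoef α T r N n s *
          (∑ k ∈ Finset.Icc 1 s, bcoef α T r N s k * (w k - w (k - 1))) := by
        apply Finset.sum_le_sum
        intro s hs
        simp only [Finset.mem_Icc] at hs
        exact mul_le_mul_of_nonneg_left (hkey s hs.1 hs.2) (hpnn s hs.1 hs.2)
    _ = ∑ s ∈ Finset.Icc 1 n, ∑ k ∈ Finset.Icc 1 s,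
          pcoef α T r N n s * (bcoef α T r N s k * (w k - w (k - 1))) := by
        refine Finset.sum_congr rfl (fun s _ => ?_)
        rw [Finset.mul_sum]
    _ = ∑ k ∈ Finset.Icc 1 n, ∑ s ∈ Finset.Icc k n,
          pcoef α T r N n s * (bcoef α T r N s k * (w k - w (k - 1))) := by
        apply Finset.sum_comm'
        intro x y
        simp only [Finset.mem_Icc]
        omega
    _ = ∑ k ∈ Finset.Icc 1 n,
          (∑ s ∈ Finset.Icc k n, pcoef α T r N n s * bcoef α T r N s k) *
            (w k - w (k - 1)) := by
        refine Finset.sum_congr rfl (fun k _ => ?_)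
        rw [Finset.sum_mul]
        refine Finset.sum_congr rfl (fun s _ => by ring)
    _ = ∑ k ∈ Finset.Icc 1 n, (w k - w (k - 1)) := by
        refine Finset.sum_congr rfl (fun k hk => ?_)
        simp only [Finset.mem_Icc] at hk
        rw [pcoef_P2 hα0 hα1 hT hr hN hn1 hk.1 hk.2, one_mul]
    _ = w n := htel n
    _ ≤ C * (N:ℝ) ^ (-γ) := by
        rw [hwpos n hn1]
        have hnσ : (n:ℝ) ^ σ ≤ (N:ℝ) ^ σ :=
          Real.rpow_le_rpow (Nat.cast_nonneg _) (by exact_mod_cast hnN) hσ0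
        have hNN : (N:ℝ) ^ (-(r*α)) * (N:ℝ) ^ σ = (N:ℝ) ^ (-γ) := by
          rw [← Real.rpow_add hNpos, show -(r*α) + σ = -γ by rw [hσ_def]; ring]
        calc C * (N:ℝ) ^ (-(r * α)) * (n:ℝ) ^ σ
            ≤ C * (N:ℝ) ^ (-(r * α)) * (N:ℝ) ^ σ := by
              apply mul_le_mul_of_nonneg_left hnσ
              have := Real.rpow_nonneg hNpos.le (-(r*α))
              positivity
          _ = C * (N:ℝ) ^ (-γ) := by rw [mul_assoc, hNN]

end
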